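/- Let N ≥ 1 and let b₀ ∈ ℂ^N be an initial condition. For the modified midpoint mass-preserving scheme there exists Δt₁ > 0 (depending only on ‖b₀‖₂) such that for any fixed 0 < Δt ≤ Δt₁ there exists an infinite sequence (bₙ)_{n≥0} in ℂ^N with, for every n ≥ 0 and every j = 1,…,N (indices extended by zero), b_{j,n+1} = b_{j,n} + Δt·( −i·((|b_{j,n}|² + |b_{j,n+1}|²)/2)·m_{j,n} + 2i \bar{m_{j,n}}( m_{j+1,n}² + m_{j−1,n}² ) ), where m_{j,n} = (b_{j,n} + b_{j,n+1})/2; i.e., the scheme can always be solved, for all time steps, at this fixed Δt. -/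

import Mathlib

open scoped NNReal

/-- The modified midpoint (mass-preserving) scheme relating `a = bₙ` to
`b = bₙ₊₁` with time step `Δt`, with `m j = (a j + b j)/2`. -/
def massScheme (N : ℕ) (Δt : ℝ) (a b : ℕ → ℂ) : Prop :=
  ∀ j ∈ Finset.Icc 1 N,
    b j = a j + (Δt : ℂ) *
      (-Complex.I * ((((Complex.normSq (a j) + Complex.normSq (b j)) / 2 : ℝ) : ℂ))
          * ((a j + b j) / 2)
        + 2 * Complex.I * (starRingEnd ℂ) ((a j + b j) / 2)
          * (((a (j + 1) + b (j + 1)) / 2) ^ 2 + ((a (j - 1) + b (j - 1)) / 2) ^ 2))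

/-! ### Auxiliary definitions -/

/-- The nonlinear right-hand side of the implicit scheme. -/
noncomputable def rhsK (a b : ℕ → ℂ) (j : ℕ) : ℂ :=
  -Complex.I * ((((Complex.normSq (a j) + Complex.normSq (b j)) / 2 : ℝ) : ℂ))
      * ((a j + b j) / 2)
    + 2 * Complex.I * (starRingEnd ℂ) ((a j + b j) / 2)
      * (((a (j + 1) + b (j + 1)) / 2) ^ 2 + ((a (j - 1) + b (j - 1)) / 2) ^ 2)

/-- The discrete "flux" used in the telescoping mass identity. -/
noncomputable def gfun (Δt : ℝ) (a b : ℕ → ℂ) (j : ℕ) : ℝ :=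
  Δt * (4*Complex.I*((starRingEnd ℂ) ((a j + b j)/2))^2*((a (j+1) + b (j+1))/2)^2).re

/-- Extension of a vector in `ℂ^N` by zero to indices `0` and `> N`. -/
noncomputable def extFun (N : ℕ) (x : Fin N → ℂ) : ℕ → ℂ :=
  fun j => if h : 1 ≤ j ∧ j ≤ N then x ⟨j - 1, by omega⟩ else 0

/-- The map whose fixed points are solutions of one implicit step. -/
noncomputable def Tmap (N : ℕ) (Δt : ℝ) (a : ℕ → ℂ) (x : Fin N → ℂ) : Fin N → ℂ :=
  fun k => a (k.val + 1) + (Δt : ℂ) * rhsK a (extFun N x) (k.val + 1)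

/-! ### Per-index mass identity and conservation -/

lemma perj (A B P Q mv : ℂ) (Δt : ℝ)
    (hmv : B = 2*mv - A)
    (heq : B = A + (Δt:ℂ) * (-Complex.I * ((((Complex.normSq A + Complex.normSq B)/2 : ℝ)):ℂ) * mv
      + 2*Complex.I*(starRingEnd ℂ) mv * (P^2 + Q^2))) :
    Complex.normSq B = Complex.normSq A
      + Δt * (4*Complex.I*((starRingEnd ℂ) mv)^2*P^2).re
      - Δt * (4*Complex.I*((starRingEnd ℂ) Q)^2*mv^2).re := by
  subst hmv
  have hre := congrArg Complex.re heq
  have him := congrArg Complex.im heq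
  simp only [pow_two, Complex.add_re, Complex.add_im, Complex.sub_re, Complex.sub_im,
    Complex.mul_re, Complex.mul_im, Complex.neg_re, Complex.neg_im, Complex.I_re, Complex.I_im,
    Complex.ofReal_re, Complex.ofReal_im, Complex.conj_re, Complex.conj_im,
    Complex.normSq_apply, Complex.re_ofNat, Complex.im_ofNat] at hre him ⊢
  linear_combination (2*mv.re) * hre + (2*mv.im) * him

lemma mass_conserved {N : ℕ} {Δt : ℝ} {a b : ℕ → ℂ}
    (ha0 : a 0 = 0) (haN : a (N+1) = 0) (hb0 : b 0 = 0) (hbN : b (N+1) = 0)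
    (h : massScheme N Δt a b) :
    ∑ j ∈ Finset.Icc 1 N, Complex.normSq (b j) = ∑ j ∈ Finset.Icc 1 N, Complex.normSq (a j) := by
  have hgN : gfun Δt a b N = 0 := by simp [gfun, haN, hbN]
  have hg0 : gfun Δt a b 0 = 0 := by simp [gfun, ha0, hb0]
  have hstep : ∀ j ∈ Finset.Icc 1 N,
      Complex.normSq (b j) = Complex.normSq (a j) + (gfun Δt a b j - gfun Δt a b (j-1)) := by
    intro j hj
    rw [Finset.mem_Icc] at hj
    have heq := h j (Finset.mem_Icc.mpr hj)
    have hj1 : j - 1 + 1 = j := by omega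
    have hper := perj (a j) (b j) ((a (j+1)+b (j+1))/2) ((a (j-1)+b (j-1))/2) ((a j + b j)/2)
      Δt (by ring) heq
    have h2 : gfun Δt a b (j-1)
        = Δt * (4*Complex.I*((starRingEnd ℂ) ((a (j-1) + b (j-1))/2))^2*((a j + b j)/2)^2).re := by
      simp only [gfun, hj1]
    rw [h2]
    rw [hper]
    simp only [gfun]
    ring
  rw [Finset.sum_congr rfl hstep, Finset.sum_add_distrib]
  have e2 : ∑ j ∈ Finset.Icc 1 N, (gfun Δt a b j - gfun Δt a b (j-1))
      = gfun Δt a b N - gfun Δt a b 0 := by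
    rw [← Finset.Ico_add_one_right_eq_Icc, Finset.sum_Ico_eq_sum_range]
    simp only [Nat.add_sub_cancel]
    have hc : ∀ i ∈ Finset.range N, gfun Δt a b (1+i) - gfun Δt a b (1+i-1)
        = gfun Δt a b (i+1) - gfun Δt a b i := by
      intro i _
      congr 1 <;> congr 1 <;> omega
    rw [Finset.sum_congr rfl hc, Finset.sum_range_sub (f := gfun Δt a b)]
  rw [e2, hgN, hg0]
  ring

/-! ### Norm estimates for the nonlinearity -/

lemma mid_norm_le {u v : ℂ} {R : ℝ} (hu : ‖u‖ ≤ R) (hv : ‖v‖ ≤ R) : ‖(u + v)/2‖ ≤ R := by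
  rw [norm_div]
  have h2 : ‖(2:ℂ)‖ = 2 := by norm_num
  rw [h2]
  have := norm_add_le u v
  linarith

lemma normSq_le_sq {z : ℂ} {R : ℝ} (h : ‖z‖ ≤ R) : Complex.normSq z ≤ R^2 := by
  have : Complex.normSq z = ‖z‖^2 := by
    rw [Complex.normSq_eq_norm_sq]
  rw [this]
  have := norm_nonneg z
  nlinarith

lemma prod_diff_norm {x y x' y' : ℂ} {Rx Ry dx dy : ℝ}
    (hx : ‖x‖ ≤ Rx) (hy' : ‖y'‖ ≤ Ry) (hdx : ‖x - x'‖ ≤ dx) (hdy : ‖y - y'‖ ≤ dy) :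
    ‖x*y - x'*y'‖ ≤ Rx*dy + dx*Ry := by
  have hsplit : x*y - x'*y' = x*(y - y') + (x - x')*y' := by ring
  rw [hsplit]
  calc ‖x*(y-y') + (x-x')*y'‖ ≤ ‖x*(y-y')‖ + ‖(x-x')*y'‖ := norm_add_le _ _
  _ = ‖x‖*‖y-y'‖ + ‖x-x'‖*‖y'‖ := by rw [norm_mul, norm_mul]
  _ ≤ Rx*dy + dx*Ry := add_le_add
      (mul_le_mul hx hdy (norm_nonneg _) ((norm_nonneg x).trans hx))
      (mul_le_mul hdx hy' (norm_nonneg _) ((norm_nonneg _).trans hdx))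

lemma norm_conj' (z : ℂ) : ‖(starRingEnd ℂ) z‖ = ‖z‖ := by
  rw [starRingEnd_apply, norm_star]

lemma neg_I_mul_norm (z : ℂ) : ‖-Complex.I * z‖ = ‖z‖ := by
  rw [norm_mul, norm_neg, Complex.norm_I, one_mul]

lemma norm_two_I : ‖(2 * Complex.I : ℂ)‖ = 2 := by
  rw [norm_mul, Complex.norm_I, mul_one]
  norm_num

lemma two_I_mul_norm (z : ℂ) : ‖2 * Complex.I * z‖ = 2 * ‖z‖ := by
  rw [norm_mul, norm_two_I]

lemma rhsK_norm_le {R : ℝ} {a b : ℕ → ℂ} {j : ℕ}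
    (h1 : ‖a j‖ ≤ R) (h2 : ‖a (j+1)‖ ≤ R) (h3 : ‖a (j-1)‖ ≤ R)
    (h4 : ‖b j‖ ≤ R) (h5 : ‖b (j+1)‖ ≤ R) (h6 : ‖b (j-1)‖ ≤ R) :
    ‖rhsK a b j‖ ≤ 5 * R ^ 3 := by
  have hR : 0 ≤ R := (norm_nonneg _).trans h1
  have hm : ‖(a j + b j)/2‖ ≤ R := mid_norm_le h1 h4
  have hmp : ‖(a (j+1) + b (j+1))/2‖ ≤ R := mid_norm_le h2 h5
  have hmq : ‖(a (j-1) + b (j-1))/2‖ ≤ R := mid_norm_le h3 h6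
  have hmu : ‖((((Complex.normSq (a j) + Complex.normSq (b j)) / 2 : ℝ)):ℂ)‖ ≤ R^2 := by
    rw [Complex.norm_real, Real.norm_eq_abs]
    have n1 := normSq_le_sq h1
    have n4 := normSq_le_sq h4
    have p1 := Complex.normSq_nonneg (a j)
    have p4 := Complex.normSq_nonneg (b j)
    rw [abs_of_nonneg (by positivity)]
    linarith
  have hA : ‖-Complex.I * ((((Complex.normSq (a j) + Complex.normSq (b j)) / 2 : ℝ)):ℂ)
      * ((a j + b j)/2)‖ ≤ R^2 * R := by
    rw [mul_assoc, neg_I_mul_norm, norm_mul]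
    exact mul_le_mul hmu hm (norm_nonneg _) (by positivity)
  have hS : ‖((a (j+1) + b (j+1))/2)^2 + ((a (j-1) + b (j-1))/2)^2‖ ≤ R^2 + R^2 := by
    refine le_trans (norm_add_le _ _) ?_
    rw [norm_pow, norm_pow]
    have := norm_nonneg ((a (j+1) + b (j+1))/2)
    have := norm_nonneg ((a (j-1) + b (j-1))/2)
    nlinarith
  have hB : ‖2 * Complex.I * (starRingEnd ℂ) ((a j + b j)/2)
      * (((a (j+1) + b (j+1))/2)^2 + ((a (j-1) + b (j-1))/2)^2)‖ ≤ 2 * R * (R^2 + R^2) := by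
    rw [norm_mul, norm_mul, norm_two_I, norm_conj']
    exact mul_le_mul (by linarith) hS (norm_nonneg _) (by positivity)
  calc ‖rhsK a b j‖ ≤ R^2*R + 2*R*(R^2+R^2) := by
        refine le_trans (norm_add_le _ _) (add_le_add hA hB)
  _ ≤ 5 * R^3 := by nlinarith

lemma final_comb {X Y : ℂ} {R δ : ℝ} (hR : 0 ≤ R) (hδ : 0 ≤ δ)
    (hX : ‖X‖ ≤ R^2*(δ/2) + (R*δ)*R)
    (hY : ‖Y‖ ≤ R*(2*(R*(δ/2)+(δ/2)*R)) + (δ/2)*(R^2+R^2)) :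
    ‖-Complex.I * X + 2*Complex.I*Y‖ ≤ 8*R^2*δ := by
  calc ‖-Complex.I * X + 2*Complex.I*Y‖ ≤ ‖-Complex.I*X‖ + ‖2*Complex.I*Y‖ := norm_add_le _ _
  _ = ‖X‖ + 2*‖Y‖ := by rw [neg_I_mul_norm, two_I_mul_norm]
  _ ≤ 8*R^2*δ := by nlinarith [norm_nonneg X, norm_nonneg Y]

set_option maxHeartbeats 2000000 in
lemma rhsK_lip {R δ : ℝ} {a b c : ℕ → ℂ} {j : ℕ} (hδ : 0 ≤ δ)
    (h1 : ‖a j‖ ≤ R) (h2 : ‖a (j+1)‖ ≤ R) (h3 : ‖a (j-1)‖ ≤ R)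
    (h4 : ‖b j‖ ≤ R) (h5 : ‖b (j+1)‖ ≤ R) (h6 : ‖b (j-1)‖ ≤ R)
    (h7 : ‖c j‖ ≤ R) (h8 : ‖c (j+1)‖ ≤ R) (h9 : ‖c (j-1)‖ ≤ R)
    (d1 : ‖b j - c j‖ ≤ δ) (d2 : ‖b (j+1) - c (j+1)‖ ≤ δ) (d3 : ‖b (j-1) - c (j-1)‖ ≤ δ) :
    ‖rhsK a b j - rhsK a c j‖ ≤ 8 * R^2 * δ := by
  have hR : 0 ≤ R := (norm_nonneg _).trans h1
  have hm : ‖(a j + b j)/2‖ ≤ R := mid_norm_le h1 h4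
  have hm' : ‖(a j + c j)/2‖ ≤ R := mid_norm_le h1 h7
  have hmp : ‖(a (j+1) + b (j+1))/2‖ ≤ R := mid_norm_le h2 h5
  have hmp' : ‖(a (j+1) + c (j+1))/2‖ ≤ R := mid_norm_le h2 h8
  have hmq : ‖(a (j-1) + b (j-1))/2‖ ≤ R := mid_norm_le h3 h6
  have hmq' : ‖(a (j-1) + c (j-1))/2‖ ≤ R := mid_norm_le h3 h9
  have hdm : ‖(a j + b j)/2 - (a j + c j)/2‖ ≤ δ/2 := by
    rw [show (a j + b j)/2 - (a j + c j)/2 = (b j - c j)/2 by ring, norm_div]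
    have h2' : ‖(2:ℂ)‖ = 2 := by norm_num
    rw [h2']; linarith
  have hdmp : ‖(a (j+1) + b (j+1))/2 - (a (j+1) + c (j+1))/2‖ ≤ δ/2 := by
    rw [show (a (j+1) + b (j+1))/2 - (a (j+1) + c (j+1))/2 = (b (j+1) - c (j+1))/2 by ring, norm_div]
    have h2' : ‖(2:ℂ)‖ = 2 := by norm_num
    rw [h2']; linarith
  have hdmq : ‖(a (j-1) + b (j-1))/2 - (a (j-1) + c (j-1))/2‖ ≤ δ/2 := by
    rw [show (a (j-1) + b (j-1))/2 - (a (j-1) + c (j-1))/2 = (b (j-1) - c (j-1))/2 by ring, norm_div]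
    have h2' : ‖(2:ℂ)‖ = 2 := by norm_num
    rw [h2']; linarith
  have hmu : ‖((((Complex.normSq (a j) + Complex.normSq (b j)) / 2 : ℝ)):ℂ)‖ ≤ R^2 := by
    rw [Complex.norm_real, Real.norm_eq_abs]
    have n1 := normSq_le_sq h1
    have n4 := normSq_le_sq h4
    have p1 := Complex.normSq_nonneg (a j)
    have p4 := Complex.normSq_nonneg (b j)
    rw [abs_of_nonneg (by positivity)]; linarith
  have hdmu : ‖((((Complex.normSq (a j) + Complex.normSq (b j)) / 2 : ℝ)):ℂ)
      - ((((Complex.normSq (a j) + Complex.normSq (c j)) / 2 : ℝ)):ℂ)‖ ≤ R*δ := by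
    rw [← Complex.ofReal_sub, Complex.norm_real, Real.norm_eq_abs]
    have e1 : Complex.normSq (b j) = ‖b j‖^2 := by
      rw [Complex.normSq_eq_norm_sq]
    have e2 : Complex.normSq (c j) = ‖c j‖^2 := by
      rw [Complex.normSq_eq_norm_sq]
    have h3' : |‖b j‖ - ‖c j‖| ≤ δ := le_trans (abs_norm_sub_norm_le _ _) d1
    have hb0 := norm_nonneg (b j)
    have hc0 := norm_nonneg (c j)
    rw [show (Complex.normSq (a j) + Complex.normSq (b j))/2
        - (Complex.normSq (a j) + Complex.normSq (c j))/2
        = (Complex.normSq (b j) - Complex.normSq (c j))/2 by ring, e1, e2]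
    rw [abs_le]
    obtain ⟨hl, hr⟩ := abs_le.1 h3'
    constructor <;> nlinarith
  have hT1 : ‖((((Complex.normSq (a j) + Complex.normSq (b j)) / 2 : ℝ)):ℂ) * ((a j + b j)/2)
      - ((((Complex.normSq (a j) + Complex.normSq (c j)) / 2 : ℝ)):ℂ) * ((a j + c j)/2)‖
      ≤ R^2*(δ/2) + (R*δ)*R :=
    prod_diff_norm hmu hm' hdmu hdm
  have hP : ‖((a (j+1) + b (j+1))/2)^2 - ((a (j+1) + c (j+1))/2)^2‖ ≤ R*(δ/2) + (δ/2)*R := by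
    rw [pow_two, pow_two]
    exact prod_diff_norm hmp hmp' hdmp hdmp
  have hQ : ‖((a (j-1) + b (j-1))/2)^2 - ((a (j-1) + c (j-1))/2)^2‖ ≤ R*(δ/2) + (δ/2)*R := by
    rw [pow_two, pow_two]
    exact prod_diff_norm hmq hmq' hdmq hdmq
  have hSd : ‖(((a (j+1) + b (j+1))/2)^2 + ((a (j-1) + b (j-1))/2)^2)
      - (((a (j+1) + c (j+1))/2)^2 + ((a (j-1) + c (j-1))/2)^2)‖ ≤ 2*(R*(δ/2)+(δ/2)*R) := by
    rw [show (((a (j+1) + b (j+1))/2)^2 + ((a (j-1) + b (j-1))/2)^2)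
      - (((a (j+1) + c (j+1))/2)^2 + ((a (j-1) + c (j-1))/2)^2)
      = (((a (j+1) + b (j+1))/2)^2 - ((a (j+1) + c (j+1))/2)^2)
      + (((a (j-1) + b (j-1))/2)^2 - ((a (j-1) + c (j-1))/2)^2) by ring]
    exact le_trans (norm_add_le _ _) (by linarith)
  have hS' : ‖((a (j+1) + c (j+1))/2)^2 + ((a (j-1) + c (j-1))/2)^2‖ ≤ R^2 + R^2 := by
    refine le_trans (norm_add_le _ _) ?_
    rw [norm_pow, norm_pow]
    have := norm_nonneg ((a (j+1) + c (j+1))/2)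
    have := norm_nonneg ((a (j-1) + c (j-1))/2)
    nlinarith
  have hconjm : ‖(starRingEnd ℂ) ((a j + b j)/2)‖ ≤ R := by rw [norm_conj']; exact hm
  have hdconj : ‖(starRingEnd ℂ) ((a j + b j)/2) - (starRingEnd ℂ) ((a j + c j)/2)‖ ≤ δ/2 := by
    rw [← map_sub, norm_conj']; exact hdm
  have hT2 : ‖(starRingEnd ℂ) ((a j + b j)/2)
        * (((a (j+1) + b (j+1))/2)^2 + ((a (j-1) + b (j-1))/2)^2)
      - (starRingEnd ℂ) ((a j + c j)/2)
        * (((a (j+1) + c (j+1))/2)^2 + ((a (j-1) + c (j-1))/2)^2)‖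
      ≤ R*(2*(R*(δ/2)+(δ/2)*R)) + (δ/2)*(R^2+R^2) :=
    prod_diff_norm hconjm hS' hdconj hSd
  have hdecomp : rhsK a b j - rhsK a c j
      = -Complex.I * (((((Complex.normSq (a j) + Complex.normSq (b j)) / 2 : ℝ)):ℂ) * ((a j + b j)/2)
          - ((((Complex.normSq (a j) + Complex.normSq (c j)) / 2 : ℝ)):ℂ) * ((a j + c j)/2))
        + 2*Complex.I*((starRingEnd ℂ) ((a j + b j)/2)
            * (((a (j+1) + b (j+1))/2)^2 + ((a (j-1) + b (j-1))/2)^2)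
          - (starRingEnd ℂ) ((a j + c j)/2)
            * (((a (j+1) + c (j+1))/2)^2 + ((a (j-1) + c (j-1))/2)^2)) := by
    simp only [rhsK]
    ring
  rw [hdecomp]
  exact final_comb hR hδ hT1 hT2

/-! ### Solvability of a single implicit step -/

lemma extFun_norm_le {N : ℕ} (x : Fin N → ℂ) (j : ℕ) : ‖extFun N x j‖ ≤ ‖x‖ := by
  unfold extFun
  split
  · exact norm_le_pi_norm x _
  · simp

lemma extFun_sub_norm_le {N : ℕ} (x y : Fin N → ℂ) (j : ℕ) :
    ‖extFun N x j - extFun N y j‖ ≤ ‖x - y‖ := by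
  unfold extFun
  split
  · exact norm_le_pi_norm (x - y) _
  · simp

lemma extFun_eq {N : ℕ} (x : Fin N → ℂ) {j : ℕ} (h1 : 1 ≤ j) (h2 : j ≤ N) :
    extFun N x j = x ⟨j - 1, by omega⟩ := by
  unfold extFun
  rw [dif_pos ⟨h1, h2⟩]

lemma step_exists (N : ℕ) (M : ℝ) (Δt : ℝ)
    (hΔt : 0 < Δt) (hΔt1 : Δt ≤ 1/(16*(M+1)^3))
    (a : ℕ → ℂ) (haM : ∀ j, j ≤ N+1 → ‖a j‖ ≤ M) :
    ∃ b : ℕ → ℂ, b 0 = 0 ∧ (∀ j, N < j → b j = 0) ∧ massScheme N Δt a b := by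
  set R : ℝ := M + 1 with hRdef
  have hM : 0 ≤ M := (norm_nonneg (a 0)).trans (haM 0 (by omega))
  have hR1 : 1 ≤ R := by simp [hRdef]; linarith
  have hR0 : 0 < R := lt_of_lt_of_le one_pos hR1
  have haR : ∀ j, j ≤ N+1 → ‖a j‖ ≤ R := fun j hj => (haM j hj).trans (by simp [hRdef])
  have hΔtR : Δt ≤ 1/(16*R^3) := hΔt1
  have hidx : ∀ k : Fin N, k.val + 1 ≤ N + 1 ∧ k.val + 1 + 1 ≤ N + 1 ∧ k.val + 1 - 1 ≤ N + 1 := by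
    intro k; have := k.isLt; omega
  set s : Set (Fin N → ℂ) := Metric.closedBall (0 : Fin N → ℂ) R with hs
  have hsc : IsComplete s := Metric.isClosed_closedBall.isComplete
  have hbound : ∀ x : Fin N → ℂ, x ∈ s → ∀ j, ‖extFun N x j‖ ≤ R := by
    intro x hx j
    have : ‖x‖ ≤ R := by rwa [hs, Metric.mem_closedBall, dist_zero_right] at hx
    exact (extFun_norm_le x j).trans this
  have hmaps : Set.MapsTo (Tmap N Δt a) s s := by
    intro x hx
    rw [hs, Metric.mem_closedBall, dist_zero_right]
    rw [pi_norm_le_iff_of_nonneg hR0.le]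
    intro k
    obtain ⟨hk1, hk2, hk3⟩ := hidx k
    have hnl : ‖rhsK a (extFun N x) (k.val + 1)‖ ≤ 5 * R^3 :=
      rhsK_norm_le (haR _ hk1) (haR _ hk2) (haR _ hk3)
        (hbound x hx _) (hbound x hx _) (hbound x hx _)
    calc ‖Tmap N Δt a x k‖ ≤ ‖a (k.val+1)‖ + ‖(Δt:ℂ) * rhsK a (extFun N x) (k.val+1)‖ :=
          norm_add_le _ _
    _ = ‖a (k.val+1)‖ + Δt * ‖rhsK a (extFun N x) (k.val+1)‖ := by
          rw [norm_mul, Complex.norm_real, Real.norm_eq_abs, abs_of_pos hΔt]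
    _ ≤ M + (1/(16*R^3)) * (5*R^3) := by
          refine add_le_add (haM _ hk1) ?_
          refine mul_le_mul hΔtR hnl (norm_nonneg _) (by positivity)
    _ ≤ R := by
          rw [hRdef]
          have : (1/(16*R^3)) * (5*R^3) = 5/16 := by field_simp
          rw [this]; norm_num
  have hlip : ∀ x ∈ s, ∀ y ∈ s,
      dist (Tmap N Δt a x) (Tmap N Δt a y) ≤ (1/2 : ℝ) * dist x y := by
    intro x hx y hy
    rw [dist_eq_norm, dist_eq_norm]
    have hd0 : (0:ℝ) ≤ (1/2) * ‖x - y‖ := by positivity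
    rw [pi_norm_le_iff_of_nonneg hd0]
    intro k
    obtain ⟨hk1, hk2, hk3⟩ := hidx k
    have hdiff : Tmap N Δt a x k - Tmap N Δt a y k
        = (Δt:ℂ) * (rhsK a (extFun N x) (k.val+1) - rhsK a (extFun N y) (k.val+1)) := by
      simp only [Tmap]; ring
    have hlipk : ‖rhsK a (extFun N x) (k.val+1) - rhsK a (extFun N y) (k.val+1)‖
        ≤ 8 * R^2 * ‖x - y‖ :=
      rhsK_lip (norm_nonneg _) (haR _ hk1) (haR _ hk2) (haR _ hk3)
        (hbound x hx _) (hbound x hx _) (hbound x hx _)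
        (hbound y hy _) (hbound y hy _) (hbound y hy _)
        (extFun_sub_norm_le x y _) (extFun_sub_norm_le x y _) (extFun_sub_norm_le x y _)
    rw [Pi.sub_apply, hdiff, norm_mul, Complex.norm_real, Real.norm_eq_abs, abs_of_pos hΔt]
    calc Δt * ‖rhsK a (extFun N x) (k.val+1) - rhsK a (extFun N y) (k.val+1)‖
        ≤ (1/(16*R^3)) * (8 * R^2 * ‖x - y‖) := by
          refine mul_le_mul hΔtR hlipk (norm_nonneg _) (by positivity)
    _ ≤ (1/2) * ‖x - y‖ := by
          have hxy := norm_nonneg (x - y)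
          have e : (1/(16*R^3)) * (8 * R^2 * ‖x - y‖) = (1/(2*R)) * ‖x - y‖ := by
            field_simp; ring
          rw [e]
          have h2R : (1/(2*R)) ≤ 1/2 := by
            apply one_div_le_one_div_of_le <;> linarith
          exact mul_le_mul_of_nonneg_right h2R hxy
  have hcontr : ContractingWith (1/2 : ℝ≥0) (hmaps.restrict (Tmap N Δt a) s s) := by
    constructor
    · have h12 : ((1/2 : ℝ≥0) : ℝ) < 1 := by norm_num
      exact_mod_cast h12
    · apply LipschitzWith.of_dist_le_mul
      intro x y
      have h1 : dist (hmaps.restrict (Tmap N Δt a) s s x) (hmaps.restrict (Tmap N Δt a) s s y)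
          = dist (Tmap N Δt a x.1) (Tmap N Δt a y.1) := rfl
      have h2 : dist x y = dist x.1 y.1 := rfl
      rw [h1, h2]
      have h3 : ((1/2 : ℝ≥0) : ℝ) = 1/2 := by norm_num
      rw [h3]
      exact hlip x.1 x.2 y.1 y.2
  have h0s : (0 : Fin N → ℂ) ∈ s := by
    rw [hs, Metric.mem_closedBall, dist_zero_right, norm_zero]
    exact hR0.le
  obtain ⟨y, hys, hyfix, -, -⟩ := hcontr.exists_fixedPoint' hsc hmaps h0s (edist_ne_top _ _)
  refine ⟨extFun N y, ?_, ?_, ?_⟩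
  · unfold extFun
    rw [dif_neg]
    omega
  · intro j hj
    unfold extFun
    rw [dif_neg]
    omega
  · intro j hj
    rw [Finset.mem_Icc] at hj
    obtain ⟨hj1, hj2⟩ := hj
    have hk : j - 1 < N := by omega
    have hyj : extFun N y j = y ⟨j-1, hk⟩ := extFun_eq y hj1 hj2
    have hfix : Tmap N Δt a y = y := hyfix
    have hval : y ⟨j-1, hk⟩ = a ((j-1)+1) + (Δt:ℂ) * rhsK a (extFun N y) ((j-1)+1) := by
      conv_lhs => rw [← hfix]
      rfl
    have hj1' : j - 1 + 1 = j := by omega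
    rw [hj1'] at hval
    exact hyj.trans hval

/-! ### Main theorem -/

theorem mass_scheme_global_solvability
    (N : ℕ) (hN : 1 ≤ N)
    (b0 : ℕ → ℂ) (h00 : b0 0 = 0) (h0N : b0 (N + 1) = 0) :
    ∃ Δt₁ > (0 : ℝ), ∀ Δt : ℝ, 0 < Δt → Δt ≤ Δt₁ →
      ∃ B : ℕ → ℕ → ℂ,
        (∀ n : ℕ, B n 0 = 0 ∧ B n (N + 1) = 0) ∧
        (∀ j, B 0 j = b0 j) ∧
        (∀ n : ℕ, massScheme N Δt (B n) (B (n + 1))) := by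
  classical
  set M : ℝ := Real.sqrt (∑ j ∈ Finset.Icc 1 N, Complex.normSq (b0 j)) with hMdef
  have hsum0 : 0 ≤ ∑ j ∈ Finset.Icc 1 N, Complex.normSq (b0 j) :=
    Finset.sum_nonneg fun j _ => Complex.normSq_nonneg _
  have hM0 : 0 ≤ M := Real.sqrt_nonneg _
  have hM2 : M^2 = ∑ j ∈ Finset.Icc 1 N, Complex.normSq (b0 j) := Real.sq_sqrt hsum0
  refine ⟨1/(16*(M+1)^3), by positivity, ?_⟩
  intro Δt hΔt hΔt1
  set P : (ℕ → ℂ) → Prop := fun a =>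
    a 0 = 0 ∧ a (N+1) = 0 ∧ ∑ j ∈ Finset.Icc 1 N, Complex.normSq (a j) ≤ M^2 with hPdef
  have hstep : ∀ a : ℕ → ℂ, P a → ∃ b, P b ∧ massScheme N Δt a b := by
    rintro a ⟨ha0, haN, hamass⟩
    have haM : ∀ j, j ≤ N+1 → ‖a j‖ ≤ M := by
      intro j hj
      rcases Nat.eq_or_lt_of_le hj with hje | hjlt
      · rw [hje, haN, norm_zero]; exact hM0
      · rcases Nat.eq_zero_or_pos j with hj0 | hj1
        · rw [hj0, ha0, norm_zero]; exact hM0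
        · have hmem : j ∈ Finset.Icc 1 N := Finset.mem_Icc.mpr ⟨hj1, by omega⟩
          have hle : Complex.normSq (a j) ≤ ∑ i ∈ Finset.Icc 1 N, Complex.normSq (a i) :=
            Finset.single_le_sum (f := fun i => Complex.normSq (a i))
              (fun i _ => Complex.normSq_nonneg _) hmem
          have h1 : Complex.normSq (a j) = ‖a j‖^2 := by
            rw [Complex.normSq_eq_norm_sq]
          nlinarith [norm_nonneg (a j)]
    obtain ⟨b, hb0, hbhigh, hbscheme⟩ := step_exists N M Δt hΔt hΔt1 a haM
    have hbN : b (N+1) = 0 := hbhigh _ (by omega)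
    have hmass := mass_conserved ha0 haN hb0 hbN hbscheme
    exact ⟨b, ⟨hb0, hbN, by rw [hmass]; exact hamass⟩, hbscheme⟩
  have hP0 : P b0 := ⟨h00, h0N, le_of_eq hM2.symm⟩
  set F : {f : ℕ → ℂ // P f} → {f : ℕ → ℂ // P f} := fun a =>
    ⟨Classical.choose (hstep a.1 a.2), (Classical.choose_spec (hstep a.1 a.2)).1⟩ with hFdef
  have hF : ∀ a : {f : ℕ → ℂ // P f}, massScheme N Δt a.1 (F a).1 := fun a =>
    (Classical.choose_spec (hstep a.1 a.2)).2
  refine ⟨fun n => (F^[n] ⟨b0, hP0⟩).1, ?_, ?_, ?_⟩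
  · intro n
    exact ⟨(F^[n] ⟨b0, hP0⟩).2.1, (F^[n] ⟨b0, hP0⟩).2.2.1⟩
  · intro j
    rfl
  · intro n
    have hit : F^[n+1] ⟨b0, hP0⟩ = F (F^[n] ⟨b0, hP0⟩) := Function.iterate_succ_apply' F n _
    show massScheme N Δt (F^[n] ⟨b0, hP0⟩).1 (F^[n+1] ⟨b0, hP0⟩).1
    rw [hit]
    exact hF _
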